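/- Let ρ ∈ M_n be positive invertible with Tr(ρ^{-1}) = δ², and let X_1, …, X_d ∈ M_n satisfy the KMS-orthogonality Tr(X_i* ρ^{-1/2} X_j ρ^{-1/2}) = δ² δ_{ij}. Define V_i := ρ^{-1/4} X_i ρ^{1/4}. Then Tr(ρ^{-1} V_i* V_j) = δ² δ_{ij}, and the map A(x) := Σ_{i=1}^d V_i x V_i* satisfies m(A⊗A)m* = δ² A, i.e. A is a quantum adjacency operator for ψ = Tr(ρ ·). -/

import Mathlib

open scoped TensorProduct ComplexOrder
open Matrix

/-- The state `ψ = Tr(ρ ·)` on `M_n` as a linear functional. -/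
noncomputable def psi1 {n : ℕ} (ρ : Matrix (Fin n) (Fin n) ℂ) :
    Matrix (Fin n) (Fin n) ℂ →ₗ[ℂ] ℂ where
  toFun X := (ρ * X).trace
  map_add' x y := by simp [mul_add]
  map_smul' c x := by simp [mul_smul_comm]

/-- The GNS inner product on `M_n ⊗ M_n` paired against the pure tensor `x ⊗ y` in the first
(conjugated) slot. -/
noncomputable def pair1 {n : ℕ} (ρ x y : Matrix (Fin n) (Fin n) ℂ) :
    (Matrix (Fin n) (Fin n) ℂ ⊗[ℂ] Matrix (Fin n) (Fin n) ℂ) →ₗ[ℂ] ℂ :=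
  TensorProduct.lift
    (LinearMap.mk₂ ℂ (fun c e => psi1 ρ (star x * c) * psi1 ρ (star y * e))
      (fun c c' e => by simp [mul_add, map_add, add_mul])
      (fun s c e => by simp [mul_smul_comm, _root_.map_smul, smul_eq_mul]; ring)
      (fun c e e' => by simp [mul_add, map_add])
      (fun s c e => by simp [mul_smul_comm, _root_.map_smul, smul_eq_mul]; ring))

/-- The completely positive map `A(x) = Σ_r V_r x V_r*` as a linear map on `M_n`. -/
noncomputable def krausMap {n m : ℕ} (V : Fin m → Matrix (Fin n) (Fin n) ℂ) :
    Matrix (Fin n) (Fin n) ℂ →ₗ[ℂ] Matrix (Fin n) (Fin n) ℂ where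
  toFun x := ∑ r, V r * x * (V r)ᴴ
  map_add' x y := by simp [mul_add, add_mul, Finset.sum_add_distrib]
  map_smul' c x := by simp [mul_smul_comm, smul_mul_assoc, Finset.smul_sum]

/-- The real power `ρ^β` of a Hermitian matrix, via its spectral decomposition. -/
noncomputable def hpow {n : ℕ} {ρ : Matrix (Fin n) (Fin n) ℂ} (hρ : ρ.IsHermitian)
    (β : ℝ) : Matrix (Fin n) (Fin n) ℂ :=
  (hρ.eigenvectorUnitary : Matrix (Fin n) (Fin n) ℂ) *
    Matrix.diagonal (fun i => ((hρ.eigenvalues i ^ β : ℝ) : ℂ)) *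
    star (hρ.eigenvectorUnitary : Matrix (Fin n) (Fin n) ℂ)


section Stmt11Aux

variable {n : ℕ} {ρ : Matrix (Fin n) (Fin n) ℂ}


lemma hpow_mul (hρ : ρ.PosDef) (a b : ℝ) :
    hpow hρ.1 a * hpow hρ.1 b = hpow hρ.1 (a + b) := by
  have h1 : star (hρ.1.eigenvectorUnitary : Matrix (Fin n) (Fin n) ℂ) *
      (hρ.1.eigenvectorUnitary : Matrix (Fin n) (Fin n) ℂ) = 1 :=
    Unitary.coe_star_mul_self _
  unfold hpow
  rw [show ∀ U D1 sU D2 : Matrix (Fin n) (Fin n) ℂ,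
    (U * D1 * sU) * (U * D2 * sU) = U * (D1 * (sU * U) * D2) * sU from
      fun U D1 sU D2 => by noncomm_ring, h1, mul_one, diagonal_mul_diagonal]
  congr 2
  ext i j
  by_cases h : i = j <;>
    simp [Matrix.diagonal_apply, h, ← Complex.ofReal_mul,
      ← Real.rpow_add (hρ.eigenvalues_pos _)]

lemma hpow_one (hρ : ρ.PosDef) : hpow hρ.1 1 = ρ := by
  unfold hpow
  simp only [Real.rpow_one]
  exact (hρ.1.spectral_theorem).symm

lemma hpow_zero (hρ : ρ.PosDef) : hpow hρ.1 0 = 1 := by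
  unfold hpow
  simp only [Real.rpow_zero, Complex.ofReal_one, diagonal_one, mul_one]
  exact (Matrix.mem_unitaryGroup_iff).mp (hρ.1.eigenvectorUnitary).2

lemma hpow_neg_one (hρ : ρ.PosDef) : ρ⁻¹ = hpow hρ.1 (-1) := by
  apply Matrix.inv_eq_right_inv
  have h : hpow hρ.1 1 * hpow hρ.1 (-1) = 1 := by
    rw [hpow_mul hρ, show (1:ℝ) + -1 = 0 by norm_num, hpow_zero hρ]
  rwa [hpow_one hρ] at h

lemma star_hpow (hρ : ρ.PosDef) (a : ℝ) : (hpow hρ.1 a)ᴴ = hpow hρ.1 a := by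
  unfold hpow
  simp only [conjTranspose_mul, diagonal_conjTranspose]
  rw [← Matrix.star_eq_conjTranspose, ← Matrix.star_eq_conjTranspose, star_star]
  simp [Matrix.mul_assoc, Pi.star_def]

lemma hpow_mul_assoc (hρ : ρ.PosDef) (a b : ℝ) (C : Matrix (Fin n) (Fin n) ℂ) :
    hpow hρ.1 a * (hpow hρ.1 b * C) = hpow hρ.1 (a + b) * C := by
  rw [← mul_assoc, hpow_mul hρ]

lemma part1 (hρ : ρ.PosDef) {m : ℕ} (δ : ℝ) (X : Fin m → Matrix (Fin n) (Fin n) ℂ)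
    (horthX : ∀ i j, ((X i)ᴴ * hpow hρ.1 (-(1/2)) * X j * hpow hρ.1 (-(1/2))).trace =
      if i = j then (δ ^ 2 : ℂ) else 0)
    (V : Fin m → Matrix (Fin n) (Fin n) ℂ)
    (hV : ∀ i, V i = hpow hρ.1 (-(1/4)) * X i * hpow hρ.1 (1/4)) (i j : Fin m) :
    (ρ⁻¹ * (V i)ᴴ * V j).trace = if i = j then (δ ^ 2 : ℂ) else 0 := by
  have key : ρ⁻¹ * (V i)ᴴ * V j =
      hpow hρ.1 (-(3/4)) * ((X i)ᴴ * (hpow hρ.1 (-(1/2)) * (X j * hpow hρ.1 (1/4)))) := by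
    rw [hV i, hV j, hpow_neg_one hρ]
    simp only [conjTranspose_mul, star_hpow hρ, mul_assoc, hpow_mul_assoc hρ]
    norm_num
  rw [key, Matrix.trace_mul_comm, ← horthX i j]
  congr 1
  simp only [mul_assoc, hpow_mul_assoc hρ, hpow_mul hρ]
  norm_num


lemma pair1_tmul (x y u v : Matrix (Fin n) (Fin n) ℂ) :
    pair1 ρ x y (u ⊗ₜ[ℂ] v) = psi1 ρ (star x * u) * psi1 ρ (star y * v) := by
  simp [pair1]

lemma trace_single_mul (a b : Fin n) (c : Matrix (Fin n) (Fin n) ℂ) :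
    (single a b (1:ℂ) * c).trace = c b a := by
  simp [Matrix.trace, Matrix.diag, Matrix.mul_apply, Matrix.single,
    ite_and, Finset.sum_ite_eq]

lemma psi_single (hρ : ρ.PosDef) (a b : Fin n) (c : Matrix (Fin n) (Fin n) ℂ) :
    psi1 ρ (star (single a b (1:ℂ) * ρ⁻¹) * c) = c a b := by
  have hdet : IsUnit ρ.det := (Matrix.isUnit_iff_isUnit_det _).mp hρ.isUnit
  have h1 : star (single a b (1:ℂ) * ρ⁻¹) = ρ⁻¹ * single b a (1:ℂ) := by
    rw [Matrix.star_eq_conjTranspose, conjTranspose_mul, hρ.1.inv.eq]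
    congr 1
    simp [← Matrix.ext_iff, conjTranspose_apply, single, and_comm]
  rw [h1]
  show (ρ * (ρ⁻¹ * single b a (1:ℂ) * c)).trace = c a b
  rw [← mul_assoc, ← mul_assoc, Matrix.mul_nonsing_inv _ hdet, one_mul, trace_single_mul]

noncomputable def phi (a b c d : Fin n) :
    (Matrix (Fin n) (Fin n) ℂ ⊗[ℂ] Matrix (Fin n) (Fin n) ℂ) →ₗ[ℂ] ℂ :=
  TensorProduct.lift
    (LinearMap.mk₂ ℂ (fun u v => u a b * v c d)
      (fun u u' v => by simp [Matrix.add_apply, add_mul])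
      (fun s u v => by simp [Matrix.smul_apply, smul_eq_mul]; ring)
      (fun u v v' => by simp [Matrix.add_apply, mul_add])
      (fun s u v => by simp [Matrix.smul_apply, smul_eq_mul]; ring))

lemma phi_tmul (a b c d : Fin n) (u v : Matrix (Fin n) (Fin n) ℂ) :
    phi a b c d (u ⊗ₜ[ℂ] v) = u a b * v c d := by simp [phi]

lemma pair_eq_phi (hρ : ρ.PosDef) (a b c d : Fin n) :
    pair1 ρ (single a b (1:ℂ) * ρ⁻¹) (single c d (1:ℂ) * ρ⁻¹) =
      phi a b c d := by
  apply TensorProduct.ext'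
  intro u v
  rw [pair1_tmul, phi_tmul, psi_single hρ, psi_single hρ]

lemma tensor_ext {w w' : Matrix (Fin n) (Fin n) ℂ ⊗[ℂ] Matrix (Fin n) (Fin n) ℂ}
    (h : ∀ a b c d, phi a b c d w = phi a b c d w') : w = w' := by
  classical
  let B := (Matrix.stdBasis ℂ (Fin n) (Fin n)).tensorProduct
    (Matrix.stdBasis ℂ (Fin n) (Fin n))
  apply B.ext_elem
  rintro ⟨⟨a, b⟩, ⟨c, d⟩⟩
  have key : ∀ u, phi a b c d u = B.repr u ((a, b), (c, d)) := by
    have : phi a b c d =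
        (Finsupp.lapply ((a, b), (c, d))).comp (B.repr : _ →ₗ[ℂ] _) := by
      apply B.ext
      rintro ⟨⟨a', b'⟩, ⟨c', d'⟩⟩
      have h1 : (B ((a', b'), (c', d'))) =
          single a' b' (1:ℂ) ⊗ₜ[ℂ] single c' d' (1:ℂ) := by
        simp [B, Module.Basis.tensorProduct_apply, Matrix.stdBasis_eq_single]
      simp only [LinearMap.comp_apply, LinearEquiv.coe_coe, Finsupp.lapply_apply,
        Module.Basis.repr_self_apply]
      rw [h1, phi_tmul]
      simp only [single, Matrix.of_apply, Prod.mk.injEq]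
      split_ifs <;> simp_all
    rw [this]
    simp
  rw [← key w, ← key w', h]

lemma star_single_inv (hρ : ρ.PosDef) (a b : Fin n) :
    star (single a b (1:ℂ) * ρ⁻¹) = ρ⁻¹ * single b a (1:ℂ) := by
  rw [Matrix.star_eq_conjTranspose, conjTranspose_mul, hρ.1.inv.eq]
  congr 1
  simp [← Matrix.ext_iff, conjTranspose_apply, single, and_comm]

lemma mstar_eq (hρ : ρ.PosDef)
    (mstar : Matrix (Fin n) (Fin n) ℂ →ₗ[ℂ]
      Matrix (Fin n) (Fin n) ℂ ⊗[ℂ] Matrix (Fin n) (Fin n) ℂ)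
    (hmstar : ∀ x y z : Matrix (Fin n) (Fin n) ℂ,
      psi1 ρ (star (x * y) * z) = pair1 ρ x y (mstar z))
    (z : Matrix (Fin n) (Fin n) ℂ) :
    mstar z = ∑ j, ∑ k,
      (z * single j k (1:ℂ) * ρ⁻¹) ⊗ₜ[ℂ] single k j (1:ℂ) := by
  apply tensor_ext
  intro a b c d
  have hL : star (single a b (1:ℂ) * ρ⁻¹ * (single c d (1:ℂ) * ρ⁻¹)) * z
      = star (single c d (1:ℂ) * ρ⁻¹) *
        (star (single a b (1:ℂ) * ρ⁻¹) * z) := by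
    rw [Matrix.star_mul, mul_assoc]
  have lhs_eq : phi a b c d (mstar z) = ρ⁻¹ c b * z a d := by
    rw [← pair_eq_phi hρ, ← hmstar, hL, psi_single hρ, star_single_inv hρ]
    simp [Matrix.mul_apply, single, ite_and, Finset.sum_ite_eq,
      Finset.sum_ite_eq', mul_ite, ite_mul, mul_zero, zero_mul, mul_comm]
  rw [lhs_eq]
  simp only [map_sum, phi_tmul]
  simp [Matrix.mul_apply, single, ite_and, Finset.sum_ite_eq,
    Finset.sum_ite_eq', Finset.mul_sum, Finset.sum_mul, mul_ite, ite_mul,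
    mul_zero, zero_mul, mul_comm]

lemma sum_conj (Mx : Matrix (Fin n) (Fin n) ℂ) :
    ∑ j, ∑ k, single j k (1:ℂ) * Mx * single k j (1:ℂ)
      = Mx.trace • (1 : Matrix (Fin n) (Fin n) ℂ) := by
  ext p q
  simp [Matrix.sum_apply, Matrix.mul_apply, single, ite_and, Matrix.trace,
    Matrix.diag, Matrix.one_apply, Finset.sum_ite_eq, Finset.sum_ite_eq',
    mul_ite, ite_mul, mul_zero, zero_mul, Matrix.smul_apply, smul_eq_mul, mul_comm,
    eq_comm]


end Stmt11Aux

/-- let `ρ ∈ M_n` be positive invertible with `Tr(ρ⁻¹) = δ²`, and let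
`X_1,…,X_d ∈ M_n` satisfy the KMS-orthogonality `Tr(X_i* ρ^{-1/2} X_j ρ^{-1/2}) = δ² δ_{ij}`.
Set `V_i := ρ^{-1/4} X_i ρ^{1/4}`.  Then `Tr(ρ⁻¹ V_i* V_j) = δ² δ_{ij}` and
`A(x) = Σ_i V_i x V_i*` satisfies `m(A⊗A)m* = δ² A`, i.e. it is a quantum adjacency
operator for `ψ = Tr(ρ ·)`. -/
theorem stmt11 {n m : ℕ} (ρ : Matrix (Fin n) (Fin n) ℂ) (hρ : ρ.PosDef)
    (δ : ℝ) (hδ : 0 < δ) (hform : (ρ⁻¹).trace = (δ ^ 2 : ℂ))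
    (X : Fin m → Matrix (Fin n) (Fin n) ℂ)
    (horthX : ∀ i j, ((X i)ᴴ * hpow hρ.1 (-(1/2)) * X j * hpow hρ.1 (-(1/2))).trace =
      if i = j then (δ ^ 2 : ℂ) else 0)
    (V : Fin m → Matrix (Fin n) (Fin n) ℂ)
    (hV : ∀ i, V i = hpow hρ.1 (-(1/4)) * X i * hpow hρ.1 (1/4))
    (mstar : Matrix (Fin n) (Fin n) ℂ →ₗ[ℂ]
      Matrix (Fin n) (Fin n) ℂ ⊗[ℂ] Matrix (Fin n) (Fin n) ℂ)
    (hmstar : ∀ x y z : Matrix (Fin n) (Fin n) ℂ,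
      psi1 ρ (star (x * y) * z) = pair1 ρ x y (mstar z)) :
    (∀ i j, (ρ⁻¹ * (V i)ᴴ * V j).trace = if i = j then (δ ^ 2 : ℂ) else 0) ∧
    (∀ z : Matrix (Fin n) (Fin n) ℂ,
      LinearMap.mul' ℂ (Matrix (Fin n) (Fin n) ℂ)
          (TensorProduct.map (krausMap V) (krausMap V) (mstar z)) =
        (δ ^ 2 : ℂ) • krausMap V z) := by
  have p1 : ∀ i j, (ρ⁻¹ * (V i)ᴴ * V j).trace = if i = j then (δ ^ 2 : ℂ) else 0 :=
    part1 hρ δ X horthX V hV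
  refine ⟨p1, fun z => ?_⟩
  rw [mstar_eq hρ mstar hmstar z]
  have hA : ∀ u, krausMap V u = ∑ r, V r * u * (V r)ᴴ := fun u => rfl
  simp only [map_sum, TensorProduct.map_tmul, LinearMap.mul'_apply, hA]
  calc
    ∑ j, ∑ k, (∑ r, V r * (z * single j k (1:ℂ) * ρ⁻¹) * (V r)ᴴ) *
        (∑ s, V s * single k j (1:ℂ) * (V s)ᴴ)
      = ∑ j, ∑ k, ∑ s, ∑ r, V r * (z * single j k (1:ℂ) * ρ⁻¹) * (V r)ᴴ *
          (V s * single k j (1:ℂ) * (V s)ᴴ) := by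
        simp only [Finset.sum_mul, Finset.mul_sum]
    _ = ∑ j, ∑ s, ∑ r, ∑ k, V r * (z * single j k (1:ℂ) * ρ⁻¹) * (V r)ᴴ *
          (V s * single k j (1:ℂ) * (V s)ᴴ) := by
        refine Finset.sum_congr rfl fun j _ => ?_
        rw [Finset.sum_comm]
        exact Finset.sum_congr rfl fun s _ => Finset.sum_comm
    _ = ∑ s, ∑ r, ∑ j, ∑ k, V r * (z * single j k (1:ℂ) * ρ⁻¹) * (V r)ᴴ *
          (V s * single k j (1:ℂ) * (V s)ᴴ) := by
        rw [Finset.sum_comm]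
        exact Finset.sum_congr rfl fun s _ => Finset.sum_comm
    _ = ∑ s, ∑ r, (V r * z) *
          (∑ j, ∑ k, single j k (1:ℂ) * (ρ⁻¹ * (V r)ᴴ * V s) *
            single k j (1:ℂ)) * (V s)ᴴ := by
        refine Finset.sum_congr rfl fun s _ => Finset.sum_congr rfl fun r _ => ?_
        simp only [Finset.mul_sum, Finset.sum_mul]
        refine Finset.sum_congr rfl fun j _ => Finset.sum_congr rfl fun k _ => ?_
        simp only [mul_assoc]
    _ = ∑ s, ∑ r, (V r * z) *
          ((if r = s then (δ ^ 2 : ℂ) else 0) • (1 : Matrix (Fin n) (Fin n) ℂ)) *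
          (V s)ᴴ := by
        simp only [sum_conj, p1]
    _ = (δ ^ 2 : ℂ) • ∑ r, V r * z * (V r)ᴴ := by
        rw [Finset.smul_sum]
        refine Finset.sum_congr rfl fun s _ => ?_
        simp [mul_smul_comm, smul_mul_assoc, ite_smul, mul_assoc]
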